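/- On the flat 2-torus Σ = ℝ²/Λ, where Λ is the lattice generated by 2π(√2/√3, 0) and 2π(1/√6, 1/√2), the only eigenvalue of the Laplacian in the open interval (0,6) is 2, and its multiplicity is 6. -/

import Mathlib

open Real

/-- The dual lattice `Λ*` of the lattice `Λ ⊂ ℝ²` with basis
`2π(√2/√3, 0)` and `2π(1/√6, 1/√2)`: vectors pairing with both basis vectors
into `2πℤ`.  Eigenfunctions of the Laplacian on `ℝ²/Λ` correspond to `λ* ∈ Λ*`,
with eigenvalue `|λ*|²`. -/
def dualLattice : Set (ℝ × ℝ) :=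
  {w | (∃ n : ℤ, w.1 * (2 * π * (Real.sqrt 2 / Real.sqrt 3)) + w.2 * 0 = 2 * π * n) ∧
       (∃ n : ℤ, w.1 * (2 * π * (1 / Real.sqrt 6)) + w.2 * (2 * π * (1 / Real.sqrt 2)) = 2 * π * n)}

lemma s2 : Real.sqrt 2 ≠ 0 := by positivity
lemma s3 : Real.sqrt 3 ≠ 0 := by positivity
lemma s6 : Real.sqrt 6 = Real.sqrt 2 * Real.sqrt 3 := by
  rw [← Real.sqrt_mul (by norm_num : (0:ℝ) ≤ 2)]; norm_num
lemma m2 : Real.sqrt 2 * Real.sqrt 2 = 2 := Real.mul_self_sqrt (by norm_num)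
lemma m3 : Real.sqrt 3 * Real.sqrt 3 = 3 := Real.mul_self_sqrt (by norm_num)

lemma mem_dual_iff (w : ℝ × ℝ) :
    w ∈ dualLattice ↔ ∃ n m : ℤ, w.1 = n * (Real.sqrt 3 / Real.sqrt 2) ∧
      w.2 = (2 * m - n) / Real.sqrt 2 := by
  constructor
  · rintro ⟨⟨n, h1⟩, ⟨m, h2⟩⟩
    refine ⟨n, m, ?_, ?_⟩
    · have := pi_ne_zero
      field_simp [s6] at h1 ⊢
      nlinarith [m2, m3, pi_pos]
    · have := pi_ne_zero
      field_simp [s6] at h1 h2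
      rw [eq_div_iff s2]
      have hc : (2*π*Real.sqrt 3) ≠ 0 := by positivity
      have key : w.2 * Real.sqrt 2 * (2*π*Real.sqrt 3) = (2*(m:ℝ) - n) * (2*π*Real.sqrt 3) := by
        rw [s6] at h2
        linear_combination 2*π*h2 - h1 + (2*π*(m:ℝ)*Real.sqrt 3) * m2
      exact mul_right_cancel₀ hc key
  · rintro ⟨n, m, h1, h2⟩
    refine ⟨⟨n, ?_⟩, ⟨m, ?_⟩⟩ <;> rw [h1, h2] <;> field_simp [s6]
    · nlinarith [m2, m3, pi_pos]
    · linear_combination (-(n:ℝ)) * s6 - (Real.sqrt 6 * (m:ℝ)) * m2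

/-- `f (n,k)` is the dual lattice point with coordinates `n` along `√3/√2` and `k` along `1/√2`. -/
noncomputable def fnk (p : ℤ × ℤ) : ℝ × ℝ :=
  ((p.1 : ℝ) * (Real.sqrt 3 / Real.sqrt 2), (p.2 : ℝ) / Real.sqrt 2)

lemma norm_fnk (p : ℤ × ℤ) :
    (fnk p).1 ^ 2 + (fnk p).2 ^ 2 = ((3 * p.1 ^ 2 + p.2 ^ 2 : ℤ) : ℝ) / 2 := by
  unfold fnk
  rw [mul_pow, div_pow, div_pow, Real.sq_sqrt (by norm_num : (0:ℝ) ≤ 2),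
    Real.sq_sqrt (by norm_num : (0:ℝ) ≤ 3)]
  push_cast
  ring

lemma fnk_mem (p : ℤ × ℤ) (m : ℤ) (hm : p.2 = 2 * m - p.1) : fnk p ∈ dualLattice := by
  rw [mem_dual_iff]
  refine ⟨p.1, m, rfl, ?_⟩
  show (p.2 : ℝ) / Real.sqrt 2 = _
  rw [hm]; push_cast; ring

lemma fnk_inj : Function.Injective fnk := by
  intro p q h
  unfold fnk at h
  have ha : Real.sqrt 3 / Real.sqrt 2 ≠ 0 := div_ne_zero s3 s2
  obtain ⟨h1, h2⟩ := Prod.ext_iff.mp h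
  have e1 : (p.1 : ℝ) = q.1 := mul_right_cancel₀ ha h1
  have e2 : p.2 = q.2 := by field_simp at h2; exact_mod_cast h2
  exact Prod.ext (by exact_mod_cast e1) e2

/-- On the flat torus `ℝ²/Λ`, the only eigenvalue of the Laplacian in `(0,6)` is `2`,
with multiplicity `6`: the set of values `|λ*|²` lying in `(0,6)` for nonzero `λ* ∈ Λ*`
is exactly `{2}`, and there are exactly `6` dual lattice vectors with `|λ*|² = 2`. -/
theorem stmt_6 :
    ({μ : ℝ | ∃ w ∈ dualLattice, w ≠ 0 ∧ μ = w.1 ^ 2 + w.2 ^ 2 ∧ μ ∈ Set.Ioo (0 : ℝ) 6}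
        = {2}) ∧
    Set.ncard {w ∈ dualLattice | w.1 ^ 2 + w.2 ^ 2 = 2} = 6 := by
  have key : ∀ w ∈ dualLattice, ∃ n k : ℤ, (n + k) % 2 = 0 ∧ w = fnk (n, k) ∧
      w.1 ^ 2 + w.2 ^ 2 = ((3 * n ^ 2 + k ^ 2 : ℤ) : ℝ) / 2 := by
    intro w hw
    obtain ⟨n, m, h1, h2⟩ := (mem_dual_iff w).mp hw
    refine ⟨n, 2*m - n, by omega, ?_, ?_⟩
    · unfold fnk; push_cast; rw [← h1, ← h2]
    · have : w = fnk (n, 2*m - n) := by unfold fnk; push_cast; rw [← h1, ← h2]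
      rw [this]; exact norm_fnk _
  constructor
  · ext μ
    simp only [Set.mem_setOf_eq, Set.mem_singleton_iff]
    constructor
    · rintro ⟨w, hw, hne, hμ, h0, h6⟩
      obtain ⟨n, k, hpar, hwf, hval⟩ := key w hw
      rw [hμ] at h0 h6 ⊢
      rw [hval] at h0 h6 ⊢
      have hv0 : (0 : ℤ) < 3 * n ^ 2 + k ^ 2 := by
        have : (0:ℝ) < ((3 * n ^ 2 + k ^ 2 : ℤ) : ℝ) := by linarith
        exact_mod_cast this
      have hv12 : 3 * n ^ 2 + k ^ 2 < 12 := by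
        have : ((3 * n ^ 2 + k ^ 2 : ℤ) : ℝ) < 12 := by linarith
        exact_mod_cast this
      have hn : n^2 ≤ 3 := by nlinarith
      have hk : k^2 ≤ 11 := by nlinarith
      have hn' : -1 ≤ n ∧ n ≤ 1 := by constructor <;> nlinarith
      have hk' : -3 ≤ k ∧ k ≤ 3 := by constructor <;> nlinarith
      have hv4 : 3 * n ^ 2 + k ^ 2 = 4 := by
        obtain ⟨hn1, hn2⟩ := hn'; obtain ⟨hk1, hk2⟩ := hk'
        interval_cases n <;> interval_cases k <;> omega
      rw [hv4]; norm_num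
    · rintro rfl
      refine ⟨fnk (0, 2), fnk_mem (0,2) 1 (by norm_num), ?_, ?_, by norm_num⟩
      · unfold fnk
        simp only [ne_eq, Prod.ext_iff, not_and]
        intro _
        push_cast
        intro h
        have : Real.sqrt 2 ≠ 0 := s2
        field_simp at h
        simp at h
      · rw [norm_fnk]; norm_num
  · have hset : {w ∈ dualLattice | w.1 ^ 2 + w.2 ^ 2 = 2} =
        fnk '' (↑({((0:ℤ),(2:ℤ)), (0,-2), (1,1), (1,-1), (-1,1), (-1,-1)} : Finset (ℤ × ℤ))) := by
      ext w
      simp only [Set.mem_setOf_eq, Set.mem_image, Finset.coe_insert, Set.mem_insert_iff,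
        Finset.coe_singleton, Set.mem_singleton_iff]
      constructor
      · rintro ⟨hw, hval2⟩
        obtain ⟨n, k, hpar, hwf, hval⟩ := key w hw
        rw [hval] at hval2
        have hv4 : 3 * n ^ 2 + k ^ 2 = 4 := by
          have : ((3 * n ^ 2 + k ^ 2 : ℤ) : ℝ) = 4 := by linarith
          exact_mod_cast this
        refine ⟨(n, k), ?_, hwf.symm⟩
        have hn' : -1 ≤ n ∧ n ≤ 1 := by constructor <;> nlinarith
        have hk' : -2 ≤ k ∧ k ≤ 2 := by constructor <;> nlinarith
        obtain ⟨hn1, hn2⟩ := hn'; obtain ⟨hk1, hk2⟩ := hk'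
        simp only [Set.mem_insert_iff, Set.mem_singleton_iff, Finset.mem_insert,
          Finset.mem_singleton, Prod.mk.injEq]
        rw [pow_two, pow_two] at hv4
        interval_cases n <;> interval_cases k <;> omega
      · rintro ⟨p, hp, rfl⟩
        have hmem : fnk p ∈ dualLattice := by
          rcases hp with rfl|rfl|rfl|rfl|rfl|rfl
          · exact fnk_mem _ 1 (by norm_num)
          · exact fnk_mem _ (-1) (by norm_num)
          · exact fnk_mem _ 1 (by norm_num)
          · exact fnk_mem _ 0 (by norm_num)
          · exact fnk_mem _ 0 (by norm_num)
          · exact fnk_mem _ (-1) (by norm_num)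
        refine ⟨hmem, ?_⟩
        rw [norm_fnk]
        rcases hp with rfl|rfl|rfl|rfl|rfl|rfl <;> norm_num
    rw [hset, Set.ncard_image_of_injective _ fnk_inj, Set.ncard_coe_finset]
    decide
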